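/- Let 0 ≤ η₁, η₂ ≤ 1 and suppose there exists a joint map for the pair of noisy identity qubit channels (Λ_{η₁}, Λ_{η₂}), i.e., a linear map Λ : M₂⊗M₂ → M₂ with Λ(A⊗B) positive semidefinite for all positive semidefinite 2×2 matrices A, B, Λ(X⊗I) = Λ_{η₁}(X), and Λ(I⊗Y) = Λ_{η₂}(Y) for all 2×2 matrices X, Y. Then η₁² + η₂² ≤ 1. -/

import Mathlib

open Matrix Kronecker
open scoped ComplexOrder

noncomputable section

/-- 2×2 complex matrices. -/
abbrev M2 : Type := Matrix (Fin 2) (Fin 2) ℂ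

/-- 4×4 complex matrices, identified with `M2 ⊗ M2` via the Kronecker product. -/
abbrev M4 : Type := Matrix (Fin 2 × Fin 2) (Fin 2 × Fin 2) ℂ

/-- The noisy identity qubit channel `Λ_η(A) = η A + ((1-η)/2) tr(A) I` (Heisenberg picture). -/
def noisyId (η : ℝ) (A : M2) : M2 :=
  (η : ℂ) • A + (((1 - η) / 2 : ℝ) : ℂ) • (A.trace • (1 : M2))

/-- `Λ` is a joint map for the pair `(Λ_{η₁}, Λ_{η₂})` of noisy identity channels:
it sends Kronecker products of positive semidefinite matrices to positive semidefinite
matrices and has the two channels as its margins. -/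
def IsJointMap (η₁ η₂ : ℝ) (Λ : M4 →ₗ[ℂ] M2) : Prop :=
  (∀ A B : M2, A.PosSemidef → B.PosSemidef → (Λ (A ⊗ₖ B)).PosSemidef) ∧
  (∀ X : M2, Λ (X ⊗ₖ (1 : M2)) = noisyId η₁ X) ∧
  (∀ Y : M2, Λ ((1 : M2) ⊗ₖ Y) = noisyId η₂ Y)

namespace JointMapAux

lemma trace_nonneg_of_psd {n : Type*} [Fintype n] [DecidableEq n]
    {A : Matrix n n ℂ} (hA : A.PosSemidef) : 0 ≤ A.trace := by
  rw [Matrix.trace]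
  apply Finset.sum_nonneg
  intro i _
  have := hA.dotProduct_mulVec_nonneg (Pi.single i 1)
  simpa [dotProduct, Matrix.mulVec, Pi.single_apply] using this

lemma trace_mul_nonneg_of_psd {n : Type*} [Fintype n] [DecidableEq n]
    {A B : Matrix n n ℂ} (hA : A.PosSemidef) (hB : B.PosSemidef) :
    0 ≤ (A * B).trace := by
  obtain ⟨s, hsH, hs, hpsd⟩ : ∃ s : Matrix n n ℂ, sᴴ = s ∧ s * s = B ∧
      (sᴴ * A * s).PosSemidef := by
    open scoped MatrixOrder in
    obtain ⟨X, hX, -, hXB⟩ :=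
      CFC.exists_sqrt_of_isSelfAdjoint_of_quasispectrumRestricts hB.isHermitian
        (QuasispectrumRestricts.nnreal_of_nonneg hB.nonneg)
    exact ⟨X, hX.star_eq, by simpa using hXB, hA.conjTranspose_mul_mul_same _⟩
  have : (A * B).trace = (sᴴ * A * s).trace := by
    rw [hsH, ← hs, ← Matrix.mul_assoc, Matrix.trace_mul_cycle]
  rw [this]
  exact trace_nonneg_of_psd hpsd

lemma psd_of_row (u v : ℝ) :
    (!![((u:ℂ)*u), (u:ℂ)*v; (u:ℂ)*v, (v:ℂ)*v] : M2).PosSemidef := by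
  have h : (!![((u:ℂ)*u), (u:ℂ)*v; (u:ℂ)*v, (v:ℂ)*v] : M2)
      = (!![(u:ℂ), (v:ℂ); 0, 0] : M2)ᴴ * !![(u:ℂ), (v:ℂ); 0, 0] := by
    ext i j
    fin_cases i <;> fin_cases j <;>
      simp [Matrix.mul_apply, Fin.sum_univ_two, Matrix.conjTranspose_apply,
        Complex.conj_ofReal] <;> ring
  rw [h]
  exact Matrix.posSemidef_conjTranspose_mul_self _

/-- The core numerical inequality: PSD matrices with prescribed differences and sum. -/
lemma core (η₁ η₂ r a b : ℝ) (M₁ M₂ M₃ M₄ : M2)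
    (hr0 : 0 < r)
    (hM₁psd : M₁.PosSemidef) (hM₂psd : M₂.PosSemidef)
    (hM₃psd : M₃.PosSemidef) (hM₄psd : M₄.PosSemidef)
    (key1C : (η₂:ℂ) * ((a:ℂ)^2 - (b:ℂ)^2) + 2*(η₁:ℂ)*((a:ℂ)*b) = (r:ℂ))
    (hab1C : (a:ℂ)^2 + (b:ℂ)^2 = 1)
    (hD1 : M₁ - M₄ = !![(η₂:ℂ)/2, (η₁:ℂ)/2; (η₁:ℂ)/2, -(η₂:ℂ)/2])
    (hD2 : M₂ - M₃ = !![-(η₂:ℂ)/2, (η₁:ℂ)/2; (η₁:ℂ)/2, (η₂:ℂ)/2])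
    (hsum4 : M₁ + M₂ + M₃ + M₄ = 1) :
    r ≤ 1 := by
  set P₁ : M2 := !![(a:ℂ)*a, (a:ℂ)*b; (a:ℂ)*b, (b:ℂ)*b] with hP₁
  set Q₁ : M2 := !![(b:ℂ)*b, -((a:ℂ)*b); -((a:ℂ)*b), (a:ℂ)*a] with hQ₁
  set P₂ : M2 := !![(b:ℂ)*b, (a:ℂ)*b; (a:ℂ)*b, (a:ℂ)*a] with hP₂
  set Q₂ : M2 := !![(a:ℂ)*a, -((a:ℂ)*b); -((a:ℂ)*b), (b:ℂ)*b] with hQ₂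
  have hP₁psd : P₁.PosSemidef := psd_of_row a b
  have hQ₁psd : Q₁.PosSemidef := by
    have := psd_of_row b (-a)
    convert this using 2 <;> push_cast <;> ring_nf
  have hP₂psd : P₂.PosSemidef := by
    have := psd_of_row b a
    convert this using 2 <;> push_cast <;> ring_nf
  have hQ₂psd : Q₂.PosSemidef := by
    have := psd_of_row a (-b)
    convert this using 2 <;> push_cast <;> ring_nf
  have hPQ1 : P₁ + Q₁ = 1 := by
    ext i j
    fin_cases i <;> fin_cases j <;>
      simp [hP₁, hQ₁, Matrix.one_apply] <;> linear_combination hab1C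
  have hPQ2 : P₂ + Q₂ = 1 := by
    ext i j
    fin_cases i <;> fin_cases j <;>
      simp [hP₂, hQ₂, Matrix.one_apply] <;> linear_combination hab1C
  have t1 : ((M₁ - M₄) * P₁).trace = (r:ℂ)/2 := by
    rw [hD1, hP₁]
    simp [Matrix.trace, Matrix.mul_apply, Fin.sum_univ_two]
    linear_combination key1C / 2
  have t4 : ((M₄ - M₁) * Q₁).trace = (r:ℂ)/2 := by
    have h : M₄ - M₁ = -(M₁ - M₄) := by abel
    rw [h, hD1, hQ₁]
    simp [Matrix.trace, Matrix.mul_apply, Fin.sum_univ_two]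
    linear_combination key1C / 2
  have t2 : ((M₂ - M₃) * P₂).trace = (r:ℂ)/2 := by
    rw [hD2, hP₂]
    simp [Matrix.trace, Matrix.mul_apply, Fin.sum_univ_two]
    linear_combination key1C / 2
  have t3 : ((M₃ - M₂) * Q₂).trace = (r:ℂ)/2 := by
    have h : M₃ - M₂ = -(M₂ - M₃) := by abel
    rw [h, hD2, hQ₂]
    simp [Matrix.trace, Matrix.mul_apply, Fin.sum_univ_two]
    linear_combination key1C / 2
  have bound : ∀ (X Y P Q : M2), X.PosSemidef → Y.PosSemidef → P.PosSemidef → Q.PosSemidef →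
      P + Q = 1 → ((X - Y) * P).trace = (r:ℂ)/2 → (r:ℂ)/2 ≤ X.trace := by
    intro X Y P Q hX hY hP hQ hPQ ht
    have hsplit : X = (X - Y) * P + Y * P + X * Q := by
      calc X = X * 1 := (mul_one X).symm
      _ = X * (P + Q) := by rw [hPQ]
      _ = X * P + X * Q := mul_add X P Q
      _ = (X - Y) * P + Y * P + X * Q := by rw [sub_mul]; abel
    have h1 : 0 ≤ (Y * P).trace := trace_mul_nonneg_of_psd hY hP
    have h2 : 0 ≤ (X * Q).trace := trace_mul_nonneg_of_psd hX hQ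
    calc (r:ℂ)/2 = (r:ℂ)/2 + 0 + 0 := by ring
    _ ≤ ((X - Y) * P).trace + (Y * P).trace + (X * Q).trace :=
        add_le_add (add_le_add (le_of_eq ht.symm) h1) h2
    _ = X.trace := by rw [← Matrix.trace_add, ← Matrix.trace_add, ← hsplit]
  have b1 : (r:ℂ)/2 ≤ M₁.trace := bound M₁ M₄ P₁ Q₁ hM₁psd hM₄psd hP₁psd hQ₁psd hPQ1 t1
  have b4 : (r:ℂ)/2 ≤ M₄.trace := by
    refine bound M₄ M₁ Q₁ P₁ hM₄psd hM₁psd hQ₁psd hP₁psd ?_ t4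
    rw [add_comm]; exact hPQ1
  have b2 : (r:ℂ)/2 ≤ M₂.trace := bound M₂ M₃ P₂ Q₂ hM₂psd hM₃psd hP₂psd hQ₂psd hPQ2 t2
  have b3 : (r:ℂ)/2 ≤ M₃.trace := by
    refine bound M₃ M₂ Q₂ P₂ hM₃psd hM₂psd hQ₂psd hP₂psd ?_ t3
    rw [add_comm]; exact hPQ2
  have hsum : M₁.trace + M₂.trace + M₃.trace + M₄.trace = 2 := by
    rw [← Matrix.trace_add, ← Matrix.trace_add, ← Matrix.trace_add, hsum4]
    simp [Matrix.trace_one]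
  have htot : (r:ℂ)/2 + (r:ℂ)/2 + (r:ℂ)/2 + (r:ℂ)/2 ≤ 2 := by
    have h := add_le_add (add_le_add (add_le_add b1 b2) b3) b4
    rwa [hsum] at h
  have hrC : ((2*r : ℝ) : ℂ) ≤ ((2 : ℝ) : ℂ) := by
    have he : ((2*r : ℝ) : ℂ) = (r:ℂ)/2 + (r:ℂ)/2 + (r:ℂ)/2 + (r:ℂ)/2 := by push_cast; ring
    have he2 : ((2 : ℝ) : ℂ) = 2 := by norm_num
    rw [he, he2]; exact htot
  have := Complex.real_le_real.mp hrC
  linarith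

lemma noisy_Ap (η : ℝ) :
    noisyId η !![1/2, 1/2; 1/2, 1/2] = !![1/2, (η:ℂ)/2; (η:ℂ)/2, 1/2] := by
  ext i j
  fin_cases i <;> fin_cases j <;>
    simp [noisyId, Matrix.trace, Fin.sum_univ_two, Matrix.one_apply] <;>
    (try push_cast) <;> (try ring)

lemma noisy_Am (η : ℝ) :
    noisyId η !![1/2, -(1/2); -(1/2), 1/2] = !![1/2, -((η:ℂ)/2); -((η:ℂ)/2), 1/2] := by
  ext i j
  fin_cases i <;> fin_cases j <;>
    simp [noisyId, Matrix.trace, Fin.sum_univ_two, Matrix.one_apply] <;>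
    (try push_cast) <;> (try ring)

lemma noisy_Bp (η : ℝ) :
    noisyId η !![1, 0; 0, 0] = !![(1+(η:ℂ))/2, 0; 0, (1-(η:ℂ))/2] := by
  ext i j
  fin_cases i <;> fin_cases j <;>
    simp [noisyId, Matrix.trace, Fin.sum_univ_two, Matrix.one_apply] <;>
    (try push_cast) <;> (try ring)

end JointMapAux

open JointMapAux

/-- if a joint map for the pair of noisy identity qubit channels
`(Λ_{η₁}, Λ_{η₂})` exists, then `η₁² + η₂² ≤ 1`. -/
theorem le_of_min_tensor_compatible (η₁ η₂ : ℝ)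
    (h₁ : 0 ≤ η₁) (h₁' : η₁ ≤ 1) (h₂ : 0 ≤ η₂) (h₂' : η₂ ≤ 1)
    (hcompat : ∃ Λ : M4 →ₗ[ℂ] M2, IsJointMap η₁ η₂ Λ) :
    η₁ ^ 2 + η₂ ^ 2 ≤ 1 := by
  obtain ⟨Λ, hpos, hm1, hm2⟩ := hcompat
  rcases eq_or_lt_of_le (by positivity : (0:ℝ) ≤ η₁ ^ 2 + η₂ ^ 2) with h0 | hpos0
  · rw [← h0]; norm_num
  set r : ℝ := Real.sqrt (η₁ ^ 2 + η₂ ^ 2) with hr_def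
  have hr0 : 0 < r := Real.sqrt_pos.mpr hpos0
  have hr2 : r ^ 2 = η₁ ^ 2 + η₂ ^ 2 := Real.sq_sqrt (by positivity)
  have hrη₂ : η₂ ≤ r := by nlinarith [hr0.le]
  set a : ℝ := Real.sqrt ((r + η₂) / (2 * r)) with ha_def
  set b : ℝ := Real.sqrt ((r - η₂) / (2 * r)) with hb_def
  have ha2 : a ^ 2 = (r + η₂) / (2 * r) := Real.sq_sqrt (by positivity)
  have hb2 : b ^ 2 = (r - η₂) / (2 * r) := by
    apply Real.sq_sqrt
    have : 0 ≤ r - η₂ := by linarith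
    positivity
  have hab : a * b = η₁ / (2 * r) := by
    rw [ha_def, hb_def, ← Real.sqrt_mul (by positivity)]
    have h : (r + η₂) / (2 * r) * ((r - η₂) / (2 * r)) = (η₁ / (2 * r)) ^ 2 := by
      field_simp
      nlinarith [hr2]
    rw [h, Real.sqrt_sq (by positivity)]
  have key1 : η₂ * (a ^ 2 - b ^ 2) + 2 * η₁ * (a * b) = r := by
    rw [ha2, hb2, hab]
    field_simp
    nlinarith [hr2]
  have key1C : (η₂:ℂ) * ((a:ℂ)^2 - (b:ℂ)^2) + 2*(η₁:ℂ)*((a:ℂ)*b) = (r:ℂ) := by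
    exact_mod_cast key1
  have hab1 : a ^ 2 + b ^ 2 = 1 := by
    rw [ha2, hb2]
    field_simp
    ring
  have hab1C : (a:ℂ)^2 + (b:ℂ)^2 = 1 := by exact_mod_cast hab1
  -- effects
  have hApsd : (!![1/2, 1/2; 1/2, 1/2] : M2).PosSemidef := by
    have h := psd_of_row (Real.sqrt 2⁻¹) (Real.sqrt 2⁻¹)
    convert h using 2 <;>
      · rw [← Complex.ofReal_mul, Real.mul_self_sqrt (by norm_num)]
        norm_num
  have hAmsd : (!![1/2, -(1/2); -(1/2), 1/2] : M2).PosSemidef := by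
    have h := psd_of_row (Real.sqrt 2⁻¹) (-(Real.sqrt 2⁻¹))
    convert h using 2 <;>
      · push_cast
        rw [show ∀ x : ℂ, x * -x = -(x*x) by intro x; ring, show ∀ x : ℂ, -x * -x = x*x by intro x; ring]
        rw [← Complex.ofReal_mul, Real.mul_self_sqrt (by norm_num)]
        norm_num
  have hBpsd : (!![1, 0; 0, 0] : M2).PosSemidef := by
    have h := psd_of_row 1 0
    convert h using 2 <;> norm_num
  have hBmsd : (!![0, 0; 0, 1] : M2).PosSemidef := by
    have h := psd_of_row 0 1
    convert h using 2 <;> norm_num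
  have hAsum : (!![1/2, 1/2; 1/2, 1/2] : M2) + !![1/2, -(1/2); -(1/2), 1/2] = 1 := by
    ext i j
    fin_cases i <;> fin_cases j <;> simp [Matrix.one_apply] <;> norm_num
  have hBsum : (!![1, 0; 0, 0] : M2) + !![0, 0; 0, 1] = 1 := by
    ext i j
    fin_cases i <;> fin_cases j <;> simp [Matrix.one_apply]
  -- marginals
  have e1 : Λ (!![1/2, 1/2; 1/2, 1/2] ⊗ₖ !![1, 0; 0, 0]) +
      Λ (!![1/2, 1/2; 1/2, 1/2] ⊗ₖ !![0, 0; 0, 1]) = noisyId η₁ !![1/2, 1/2; 1/2, 1/2] := by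
    rw [← map_add, ← Matrix.kronecker_add, hBsum, hm1]
  have e1' : Λ (!![1/2, -(1/2); -(1/2), 1/2] ⊗ₖ !![1, 0; 0, 0]) +
      Λ (!![1/2, -(1/2); -(1/2), 1/2] ⊗ₖ !![0, 0; 0, 1]) =
      noisyId η₁ !![1/2, -(1/2); -(1/2), 1/2] := by
    rw [← map_add, ← Matrix.kronecker_add, hBsum, hm1]
  have e2 : Λ (!![1/2, 1/2; 1/2, 1/2] ⊗ₖ !![1, 0; 0, 0]) +
      Λ (!![1/2, -(1/2); -(1/2), 1/2] ⊗ₖ !![1, 0; 0, 0]) = noisyId η₂ !![1, 0; 0, 0] := by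
    rw [← map_add, ← Matrix.add_kronecker, hAsum, hm2]
  set M₁ : M2 := Λ (!![1/2, 1/2; 1/2, 1/2] ⊗ₖ !![1, 0; 0, 0]) with hM₁
  set M₂' : M2 := Λ (!![1/2, 1/2; 1/2, 1/2] ⊗ₖ !![0, 0; 0, 1]) with hM₂
  set M₃ : M2 := Λ (!![1/2, -(1/2); -(1/2), 1/2] ⊗ₖ !![1, 0; 0, 0]) with hM₃
  set M₄ : M2 := Λ (!![1/2, -(1/2); -(1/2), 1/2] ⊗ₖ !![0, 0; 0, 1]) with hM₄
  have hM₁psd : M₁.PosSemidef := hpos _ _ hApsd hBpsd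
  have hM₂psd : M₂'.PosSemidef := hpos _ _ hApsd hBmsd
  have hM₃psd : M₃.PosSemidef := hpos _ _ hAmsd hBpsd
  have hM₄psd : M₄.PosSemidef := hpos _ _ hAmsd hBmsd
  have hsum4 : M₁ + M₂' + M₃ + M₄ = 1 := by
    have h : M₁ + M₂' + M₃ + M₄ = (M₁ + M₂') + (M₃ + M₄) := by abel
    rw [h, e1, e1', noisy_Ap, noisy_Am]
    ext i j
    fin_cases i <;> fin_cases j <;> simp [Matrix.one_apply] <;> ring
  have hD1 : M₁ - M₄ = !![(η₂:ℂ)/2, (η₁:ℂ)/2; (η₁:ℂ)/2, -(η₂:ℂ)/2] := by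
    have h : M₁ - M₄ = (M₁ + M₂') + (M₁ + M₃) - ((M₁ + M₂') + (M₃ + M₄)) := by abel
    rw [h, e1, e1', e2, noisy_Ap, noisy_Am, noisy_Bp]
    ext i j
    fin_cases i <;> fin_cases j <;> simp <;> ring
  have hD2 : M₂' - M₃ = !![-(η₂:ℂ)/2, (η₁:ℂ)/2; (η₁:ℂ)/2, (η₂:ℂ)/2] := by
    have h : M₂' - M₃ = (M₁ + M₂') - (M₁ + M₃) := by abel
    rw [h, e1, e2, noisy_Ap, noisy_Bp]
    ext i j
    fin_cases i <;> fin_cases j <;> simp <;> ring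
  have hr1 : r ≤ 1 :=
    core η₁ η₂ r a b M₁ M₂' M₃ M₄ hr0 hM₁psd hM₂psd hM₃psd hM₄psd key1C hab1C hD1 hD2 hsum4
  nlinarith [hr1, hr0.le, hr2]

end
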